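/- Let X and Y be topological spaces and f : X × Y → [−∞, +∞] satisfy assumptions (A1)–(A4) with Δ_f finite. Let ε′ > 0, ε″ > 0, x₀ ∈ X and y₀ ∈ Y be such that v_f(x₀) > sup_{x∈X} v_f(x) − ε′ and w_f(y₀) < inf_{y∈Y} w_f(y) + ε″. Then f(x₀,y₀) < inf_{y∈Y} f(x₀,y) + ε′ + ε″ + Δ_f and f(x₀,y₀) > sup_{x∈X} f(x,y₀) − ε′ − ε″ − Δ_f. -/
import Mathlib


open Filter Topology BoundedContinuousFunction

/-- `v_f(x) = inf_{y ∈ Y} f(x,y)`. -/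
noncomputable def vmin {X Y : Type*} (f : X → Y → EReal) (x : X) : EReal := ⨅ y, f x y

/-- `w_f(y) = sup_{x ∈ X} f(x,y)`. -/
noncomputable def wmax {X Y : Type*} (f : X → Y → EReal) (y : Y) : EReal := ⨆ x, f x y

/-- `V_f = sup_{x ∈ X} v_f(x)`, the optimal value of the supinf problem. -/
noncomputable def Vval {X Y : Type*} (f : X → Y → EReal) : EReal := ⨆ x, vmin f x

/-- `W_f = inf_{y ∈ Y} w_f(y)`, the optimal value of the infsup problem. -/
noncomputable def Wval {X Y : Type*} (f : X → Y → EReal) : EReal := ⨅ y, wmax f y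

/-- (A1): for any `y ∈ Y` the function `f(·, y)` is upper semicontinuous. -/
def CondA1 {X Y : Type*} [TopologicalSpace X] (f : X → Y → EReal) : Prop :=
  ∀ y : Y, UpperSemicontinuous fun x => f x y

/-- (A2): `v_f` is bounded above on `X` and proper as a function with values in
`ℝ ∪ {-∞}` (i.e. finite at some point). -/
def CondA2 {X Y : Type*} (f : X → Y → EReal) : Prop :=
  (∃ M : ℝ, ∀ x, vmin f x ≤ (M : EReal)) ∧ ∃ x, vmin f x ≠ ⊥

/-- (A3): for any `x ∈ X` the function `f(x, ·)` is lower semicontinuous. -/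
def CondA3 {X Y : Type*} [TopologicalSpace Y] (f : X → Y → EReal) : Prop :=
  ∀ x : X, LowerSemicontinuous fun y => f x y

/-- (A4): `w_f` is bounded below on `Y` and proper as a function with values in
`ℝ ∪ {+∞}` (i.e. finite at some point). -/
def CondA4 {X Y : Type*} (f : X → Y → EReal) : Prop :=
  (∃ m : ℝ, ∀ y, (m : EReal) ≤ wmax f y) ∧ ∃ y, wmax f y ≠ ⊤

/-- `(x₀, y₀)` is a solution of the supinf problem for `f`:
`f(x₀,y₀) = inf_y f(x₀,y) = sup_x inf_y f(x,y)`. -/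
def SupinfSol {X Y : Type*} (f : X → Y → EReal) (x₀ : X) (y₀ : Y) : Prop :=
  f x₀ y₀ = vmin f x₀ ∧ vmin f x₀ = Vval f

/-- `(x₀, y₀)` is a solution of the infsup problem for `f`:
`f(x₀,y₀) = sup_x f(x,y₀) = inf_y sup_x f(x,y)`. -/
def InfsupSol {X Y : Type*} (f : X → Y → EReal) (x₀ : X) (y₀ : Y) : Prop :=
  f x₀ y₀ = wmax f y₀ ∧ wmax f y₀ = Wval f

/-- `(x₀, y₀)` is a saddle point of `f` on `X × Y`:
`f(x,y₀) ≤ f(x₀,y₀) ≤ f(x₀,y)` for all `x ∈ X`, `y ∈ Y`. -/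
def SaddlePt {X Y : Type*} (f : X → Y → EReal) (x₀ : X) (y₀ : Y) : Prop :=
  ∀ (x : X) (y : Y), f x y₀ ≤ f x₀ y₀ ∧ f x₀ y₀ ≤ f x₀ y

/-- `{(xₙ, yₙ)}` is an optimizing sequence for the saddle point problem for `f`:
`v_f(xₙ) → V_f`, `w_f(yₙ) → W_f` and `Δ_f = 0`. -/
def OptimizingSeq {X Y : Type*} (f : X → Y → EReal) (x : ℕ → X) (y : ℕ → Y) : Prop :=
  Tendsto (fun n => vmin f (x n)) atTop (𝓝 (Vval f)) ∧
  Tendsto (fun n => wmax f (y n)) atTop (𝓝 (Wval f)) ∧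
  Wval f - Vval f = 0

/-- The supinf problem for `f` is sup-well-posed with (unique) sup-solution `x₀`:
the problem `sup_X v_f` is well-posed with solution `x₀`. -/
def SupWellPosedAt {X Y : Type*} [TopologicalSpace X] (f : X → Y → EReal) (x₀ : X) : Prop :=
  vmin f x₀ = Vval f ∧ (∀ x, vmin f x = Vval f → x = x₀) ∧
  ∀ u : ℕ → X, Tendsto (fun n => vmin f (u n)) atTop (𝓝 (Vval f)) →
    Tendsto u atTop (𝓝 x₀)

/-- The infsup problem for `f` is inf-well-posed with (unique) inf-solution `y₀`:
the problem `inf_Y w_f` is well-posed with solution `y₀`. -/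
def InfWellPosedAt {X Y : Type*} [TopologicalSpace Y] (f : X → Y → EReal) (y₀ : Y) : Prop :=
  wmax f y₀ = Wval f ∧ (∀ y, wmax f y = Wval f → y = y₀) ∧
  ∀ u : ℕ → Y, Tendsto (fun n => wmax f (u n)) atTop (𝓝 (Wval f)) →
    Tendsto u atTop (𝓝 y₀)

/-- The saddle point problem for `f` is well-posed with unique solution `(x₀,y₀)`:
`(x₀,y₀)` is the unique saddle point of `f` and every optimizing sequence for the
saddle point problem converges to `(x₀,y₀)`. -/
def SPWellPosedAt {X Y : Type*} [TopologicalSpace X] [TopologicalSpace Y]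
    (f : X → Y → EReal) (x₀ : X) (y₀ : Y) : Prop :=
  SaddlePt f x₀ y₀ ∧ (∀ x y, SaddlePt f x y → x = x₀ ∧ y = y₀) ∧
  ∀ (x : ℕ → X) (y : ℕ → Y), OptimizingSeq f x y →
    Tendsto (fun n => (x n, y n)) atTop (𝓝 (x₀, y₀))

/-- The saddle point problem for `f` is well-posed. -/
def SPWellPosed {X Y : Type*} [TopologicalSpace X] [TopologicalSpace Y]
    (f : X → Y → EReal) : Prop :=
  ∃ x₀ y₀, SPWellPosedAt f x₀ y₀

/-- Key estimates from the proof of Theorem 3.3: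
`f(x₀,y₀) < inf_y f(x₀,y) + ε' + ε'' + Δ_f` and
`f(x₀,y₀) > sup_x f(x,y₀) - ε' - ε'' - Δ_f`. -/
theorem eps_saddle_estimates
    {X Y : Type*} [TopologicalSpace X] [TopologicalSpace Y]
    (f : X → Y → EReal) (hA1 : CondA1 f) (hA2 : CondA2 f) (hA3 : CondA3 f) (hA4 : CondA4 f)
    (hΔfin : Wval f - Vval f ≠ ⊥ ∧ Wval f - Vval f ≠ ⊤)
    (ε' ε'' : ℝ) (hε' : 0 < ε') (hε'' : 0 < ε'') (x₀ : X) (y₀ : Y)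
    (hx₀ : Vval f - (ε' : EReal) < vmin f x₀)
    (hy₀ : wmax f y₀ < Wval f + (ε'' : EReal)) :
    f x₀ y₀ < vmin f x₀ + ((ε' + ε'' : ℝ) : EReal) + (Wval f - Vval f) ∧
    wmax f y₀ - ((ε' + ε'' : ℝ) : EReal) - (Wval f - Vval f) < f x₀ y₀ := by

  obtain ⟨⟨M, hM⟩, ⟨x₁, hx₁⟩⟩ := hA2
  obtain ⟨⟨m, hm⟩, ⟨y₁, hy₁⟩⟩ := hA4
  have hVle : Vval f ≤ (M : EReal) := iSup_le hM
  have hVne_top : Vval f ≠ ⊤ := (lt_of_le_of_lt hVle (EReal.coe_lt_top M)).ne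
  have hVne_bot : Vval f ≠ ⊥ := by
    intro h
    exact hx₁ (le_antisymm (h ▸ le_iSup (vmin f) x₁) bot_le)
  have hWge : (m : EReal) ≤ Wval f := le_iInf hm
  have hWne_bot : Wval f ≠ ⊥ := (lt_of_lt_of_le (EReal.bot_lt_coe m) hWge).ne'
  have hWne_top : Wval f ≠ ⊤ := by
    intro h
    exact hy₁ (le_antisymm le_top (h ▸ iInf_le (wmax f) y₁))
  lift Vval f to ℝ using ⟨hVne_top, hVne_bot⟩ with V hV
  lift Wval f to ℝ using ⟨hWne_top, hWne_bot⟩ with W hW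
  have hvle : vmin f x₀ ≤ (V : EReal) := hV ▸ le_iSup (vmin f) x₀
  have hvne_top : vmin f x₀ ≠ ⊤ := (lt_of_le_of_lt hvle (EReal.coe_lt_top V)).ne
  have hvne_bot : vmin f x₀ ≠ ⊥ := by
    intro h
    rw [h] at hx₀
    exact absurd hx₀ (by simp [← EReal.coe_sub])
  lift vmin f x₀ to ℝ using ⟨hvne_top, hvne_bot⟩ with v hv
  have hwge : (W : EReal) ≤ wmax f y₀ := hW ▸ iInf_le (wmax f) y₀
  have hwne_bot : wmax f y₀ ≠ ⊥ := (lt_of_lt_of_le (EReal.bot_lt_coe W) hwge).ne'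
  have hwne_top : wmax f y₀ ≠ ⊤ := by
    intro h
    rw [h] at hy₀
    exact absurd hy₀ (by simp [← EReal.coe_add])
  lift wmax f y₀ to ℝ using ⟨hwne_top, hwne_bot⟩ with w hw
  have hfv : (v : EReal) ≤ f x₀ y₀ := hv ▸ iInf_le (f x₀) y₀
  have hfw : f x₀ y₀ ≤ (w : EReal) := hw ▸ le_iSup (fun x => f x y₀) x₀
  have hfne_bot : f x₀ y₀ ≠ ⊥ := (lt_of_lt_of_le (EReal.bot_lt_coe v) hfv).ne'
  have hfne_top : f x₀ y₀ ≠ ⊤ := (lt_of_le_of_lt hfw (EReal.coe_lt_top w)).ne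
  lift f x₀ y₀ to ℝ using ⟨hfne_top, hfne_bot⟩ with t ht
  have h1 : V - ε' < v := by exact_mod_cast (by rwa [EReal.coe_sub] : ((V - ε' : ℝ) : EReal) < (v : EReal))
  have h2 : w < W + ε'' := by exact_mod_cast (by rwa [EReal.coe_add] : (w : EReal) < ((W + ε'' : ℝ) : EReal))
  have h3 : v ≤ t := by exact_mod_cast hfv
  have h4 : t ≤ w := by exact_mod_cast hfw
  constructor <;> · norm_cast; linarith
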